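/- For every (n,m) ∈ ℤ², the two-dimensional LGF integral admits the one-dimensional representation B_c(n,m) = (1/(2π)) ∫_{−π}^{π} e^{i n θ} / ( K(θ)^{|m|} · (K(θ) − 1/K(θ)) ) dθ. -/

import Mathlib

open MeasureTheory Complex
open scoped ENNReal NNReal

/-- The lattice Green's function of the 2D screened Poisson equation. -/
noncomputable def B (α₁ c : ℝ) (n m : ℤ) : ℂ :=
  (1 / (2 * Real.pi) ^ 2 : ℂ) *
    ∫ ξ : ℝ × ℝ in Set.Icc (-Real.pi) Real.pi ×ˢ Set.Icc (-Real.pi) Real.pi,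
      Complex.exp (-Complex.I * ((n : ℂ) * (ξ.1 : ℂ) + (m : ℂ) * (ξ.2 : ℂ))) /
        ((2 * α₁ * (1 - Real.cos ξ.1) + 2 * (1 - Real.cos ξ.2) + c ^ 2 : ℝ) : ℂ)

/-- `K(θ) = (φ(θ) + √(φ(θ)² − 4))/2` with `φ(θ) = λ + c² − 2α₁ cos θ`. -/
noncomputable def Kr (α₁ c θ : ℝ) : ℝ :=
  ((2 + 2 * α₁ + c ^ 2 - 2 * α₁ * Real.cos θ) +
    Real.sqrt ((2 + 2 * α₁ + c ^ 2 - 2 * α₁ * Real.cos θ) ^ 2 - 4)) / 2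

lemma frac_id (r z : ℂ) (hz : z ≠ 0) (h1 : 1 - r*z ≠ 0) (h2 : z - r ≠ 0) (hr : r ≠ 0) :
    (1 - r*z)⁻¹ + (r*z⁻¹) * (1 - r*z⁻¹)⁻¹ = (1/r - r) / (1/r + r - (z + z⁻¹)) := by
  have hden : 1/r + r - (z + z⁻¹) = (z - r) * (1 - r*z) / (r * z) := by
    field_simp
    ring
  rw [hden]
  have h2' : 1 - r * z⁻¹ = (z - r) / z := by field_simp
  rw [h2']
  field_simp
  ring

lemma kernel_hasSum (K : ℝ) (hK : 1 < K) (θ : ℝ) :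
    HasSum (fun j : ℤ => (((1/K : ℝ) : ℂ)) ^ j.natAbs * Complex.exp (Complex.I * j * θ))
      (((K - 1/K) / (K + 1/K - 2*Real.cos θ) : ℝ) : ℂ) := by
  have hK0 : (0:ℝ) < K := lt_trans one_pos hK
  set r : ℂ := ((1/K : ℝ) : ℂ) with hr
  set z : ℂ := Complex.exp ((θ:ℂ) * Complex.I) with hzdef
  have hnz : ‖z‖ = 1 := by
    simp [hzdef, Complex.norm_exp_ofReal_mul_I]
  have hnr : ‖r‖ < 1 := by
    rw [hr, Complex.norm_real, Real.norm_eq_abs, abs_of_pos (by positivity)]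
    rw [div_lt_one hK0]; linarith
  have hz : z ≠ 0 := Complex.exp_ne_zero _
  have hnrz : ‖r * z‖ < 1 := by rw [norm_mul, hnz, mul_one]; exact hnr
  have hnrzi : ‖r * z⁻¹‖ < 1 := by
    rw [norm_mul, norm_inv, hnz, inv_one, mul_one]; exact hnr
  have h1 : HasSum (fun k : ℕ => (r*z) ^ k) (1 - r*z)⁻¹ :=
    hasSum_geometric_of_norm_lt_one hnrz
  have h2 : HasSum (fun k : ℕ => (r*z⁻¹) ^ (k+1)) ((r*z⁻¹) * (1 - r*z⁻¹)⁻¹) := by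
    simpa [pow_succ, mul_comm] using (hasSum_geometric_of_norm_lt_one hnrzi).mul_left (r*z⁻¹)
  have key : HasSum (fun j : ℤ => r ^ j.natAbs * Complex.exp (Complex.I * j * θ))
      ((1 - r*z)⁻¹ + ((r*z⁻¹) * (1 - r*z⁻¹)⁻¹)) := by
    apply HasSum.of_nat_of_neg_add_one
    · convert h1 using 2 with k
      have : Complex.exp (Complex.I * (k:ℤ) * θ) = z ^ k := by
        rw [show Complex.I * (k:ℤ) * (θ:ℂ) = (k:ℕ) * ((θ:ℂ) * Complex.I) by push_cast; ring,
          Complex.exp_nat_mul]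
      rw [this]; simp [mul_pow]
    · convert h2 using 2 with k
      have : Complex.exp (Complex.I * ((-(k+1) : ℤ)) * θ) = (z⁻¹) ^ (k+1) := by
        rw [show Complex.I * ((-(k+1):ℤ)) * (θ:ℂ) = ((k+1):ℕ) * (-((θ:ℂ) * Complex.I)) by push_cast; ring,
          Complex.exp_nat_mul, Complex.exp_neg]
      rw [this]
      have hna : ((-((k:ℤ)+1))).natAbs = k+1 := by omega
      rw [hna, mul_pow]
  have heq : ((1 - r*z)⁻¹ + ((r*z⁻¹) * (1 - r*z⁻¹)⁻¹))
      = (((K - 1/K) / (K + 1/K - 2*Real.cos θ) : ℝ) : ℂ) := by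
    have h1 : 1 - r*z ≠ 0 := by
      intro h
      have h' : (1:ℂ) = r*z := by linear_combination h
      rw [← h'] at hnrz; simp at hnrz
    have h2 : z - r ≠ 0 := by
      intro h
      have : z = r := by linear_combination h
      rw [this] at hnz
      rw [hnz] at hnr; linarith
    have hrne : r ≠ 0 := by
      rw [hr]; norm_num; positivity
    have hcos : Complex.cos (θ:ℂ) = (z + z⁻¹)/2 := by
      rw [hzdef, ← Complex.exp_neg, show -((θ:ℂ)*Complex.I) = (-(θ:ℂ))*Complex.I by ring]
      rw [Complex.exp_mul_I, Complex.exp_mul_I, Complex.cos_neg, Complex.sin_neg]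
      ring
    have hrK : (1:ℂ)/r = (K:ℂ) := by
      rw [hr]; push_cast; rw [one_div, one_div, inv_inv]
    have := frac_id r z hz h1 h2 hrne
    rw [this]
    push_cast
    have hr1 : r = ((K:ℂ))⁻¹ := by rw [hr]; push_cast; rw [one_div]
    rw [hcos, hrK, hr1, one_div]
    ring_nf
  exact heq ▸ key

lemma oneD (K : ℝ) (hK : 1 < K) (m : ℤ) :
    ∫ θ in Set.Ioc (-Real.pi) Real.pi,
      Complex.exp (-Complex.I * ((m:ℂ) * (θ:ℂ))) / ((K + 1/K - 2*Real.cos θ : ℝ) : ℂ)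
    = 2 * Real.pi / ((K ^ m.natAbs * (K - 1/K) : ℝ) : ℂ) := by
  have hK0 : (0:ℝ) < K := lt_trans one_pos hK
  have hr0 : (0:ℝ) ≤ 1/K := by positivity
  have hr1 : (1:ℝ)/K < 1 := by rw [div_lt_one hK0]; linarith
  have hKK : (0:ℝ) < K - 1/K := by
    have : 1/K < 1 := hr1
    linarith
  have hden : ∀ θ : ℝ, (0:ℝ) < K + 1/K - 2*Real.cos θ := by
    intro θ
    have h1 : Real.cos θ ≤ 1 := Real.cos_le_one θ
    have h2 : 0 < K + 1/K - 2 := by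
      have hK1 : (0:ℝ) < K - 1 := by linarith
      have : (K-1)^2/K > 0 := by positivity
      have he : K + 1/K - 2 = (K-1)^2/K := by field_simp; ring
      linarith [he ▸ this]
    linarith
  set C : ℤ → ℂ := fun j => (((K - 1/K : ℝ)) : ℂ)⁻¹ * ((1/K : ℝ) : ℂ) ^ j.natAbs with hC
  set f : ℤ → ℝ → ℂ := fun j θ => C j * Complex.exp (Complex.I * ((j:ℂ) - (m:ℂ)) * θ) with hf
  have hKKc : (((K - 1/K : ℝ)) : ℂ) ≠ 0 := Complex.ofReal_ne_zero.2 (ne_of_gt hKK)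
  -- pointwise identity
  have hpt : ∀ θ : ℝ, Complex.exp (-Complex.I * ((m:ℂ) * (θ:ℂ))) /
      ((K + 1/K - 2*Real.cos θ : ℝ) : ℂ) = ∑' j, f j θ := by
    intro θ
    have hks := kernel_hasSum K hK θ
    have h2 : HasSum (fun j : ℤ => (((K - 1/K : ℝ)) : ℂ)⁻¹ *
        (((1/K : ℝ) : ℂ) ^ j.natAbs * Complex.exp (Complex.I * j * θ) *
          Complex.exp (-Complex.I * ((m:ℂ) * (θ:ℂ)))))
        ((((K - 1/K : ℝ)) : ℂ)⁻¹ * ((((K - 1/K) / (K + 1/K - 2*Real.cos θ) : ℝ) : ℂ) *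
          Complex.exp (-Complex.I * ((m:ℂ) * (θ:ℂ))))) :=
      (hks.mul_right _).mul_left _
    have hfe : (fun j : ℤ => f j θ) = fun j : ℤ => (((K - 1/K : ℝ)) : ℂ)⁻¹ *
        (((1/K : ℝ) : ℂ) ^ j.natAbs * Complex.exp (Complex.I * j * θ) *
          Complex.exp (-Complex.I * ((m:ℂ) * (θ:ℂ)))) := by
      funext j
      simp only [hf, hC]
      rw [show Complex.I * ((j:ℂ) - (m:ℂ)) * (θ:ℂ)
          = Complex.I * (j:ℂ) * (θ:ℂ) + -Complex.I * ((m:ℂ) * (θ:ℂ)) by ring, Complex.exp_add]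
      ring
    have hdc : ((K + 1/K - 2*Real.cos θ : ℝ) : ℂ) ≠ 0 := Complex.ofReal_ne_zero.2 (ne_of_gt (hden θ))
    have gen : ∀ (a b E : ℂ), a ≠ 0 → b ≠ 0 → a⁻¹ * (a / b * E) = E / b := by
      intro a b E ha hb
      field_simp
    have hval : (((K - 1/K : ℝ)) : ℂ)⁻¹ * ((((K - 1/K) / (K + 1/K - 2*Real.cos θ) : ℝ) : ℂ) *
          Complex.exp (-Complex.I * ((m:ℂ) * (θ:ℂ))))
        = Complex.exp (-Complex.I * ((m:ℂ) * (θ:ℂ))) / ((K + 1/K - 2*Real.cos θ : ℝ) : ℂ) := by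
      rw [Complex.ofReal_div]
      exact gen _ _ _ hKKc hdc
    have h3 : HasSum (fun j => f j θ) (Complex.exp (-Complex.I * ((m:ℂ) * (θ:ℂ))) /
        ((K + 1/K - 2*Real.cos θ : ℝ) : ℂ)) := by
      rw [hfe]
      exact hval ▸ h2
    exact h3.tsum_eq.symm
  rw [MeasureTheory.setIntegral_congr_fun measurableSet_Ioc (fun θ _ => hpt θ)]
  -- swap integral and tsum
  have hmeas : ∀ j : ℤ, AEStronglyMeasurable (f j)
      (volume.restrict (Set.Ioc (-Real.pi) Real.pi)) := by
    intro j
    apply Continuous.aestronglyMeasurable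
    exact continuous_const.mul (Complex.continuous_exp.comp (by continuity))
  have hnorm : ∀ j θ, ‖f j θ‖₊ = ‖C j‖₊ := by
    intro j θ
    rw [hf]; simp only
    rw [nnnorm_mul]
    have h6 : ‖Complex.exp (Complex.I * ((j:ℂ) - (m:ℂ)) * θ)‖₊ = 1 := by
      have h5 : Complex.I * ((j:ℂ) - (m:ℂ)) * (θ:ℂ) = ((((j:ℝ) - (m:ℝ)) * θ : ℝ) : ℂ) * Complex.I := by
        push_cast; ring
      rw [h5]
      exact NNReal.coe_injective
        (by simpa using Complex.norm_exp_ofReal_mul_I (((j:ℝ) - (m:ℝ)) * θ))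
    rw [h6, mul_one]
  have hsummC : Summable (fun j : ℤ => ‖C j‖₊) := by
    rw [← NNReal.summable_coe]
    have : Summable (fun j : ℤ => (1/K) ^ j.natAbs) := by
      apply Summable.of_nat_of_neg
      · simpa using summable_geometric_of_lt_one hr0 hr1
      · simpa [Int.natAbs_neg] using summable_geometric_of_lt_one hr0 hr1
    apply Summable.of_nonneg_of_le (fun j => NNReal.coe_nonneg _)
      (fun j => ?_) (this.mul_left ‖(((K - 1/K : ℝ)) : ℂ)⁻¹‖)
    rw [hC]; simp only [coe_nnnorm, norm_mul, norm_pow]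
    apply le_of_eq
    congr 1
    rw [Complex.norm_real, Real.norm_eq_abs, _root_.abs_of_nonneg hr0]
  have hswap : ∫ θ in Set.Ioc (-Real.pi) Real.pi, ∑' j, f j θ
      = ∑' j, ∫ θ in Set.Ioc (-Real.pi) Real.pi, f j θ := by
    apply MeasureTheory.integral_tsum hmeas
    have heq : ∀ j : ℤ, (∫⁻ θ in Set.Ioc (-Real.pi) Real.pi, (‖f j θ‖₊ : ℝ≥0∞))
        = (‖C j‖₊ : ℝ≥0∞) * ENNReal.ofReal (2 * Real.pi) := by
      intro j
      calc ∫⁻ θ in Set.Ioc (-Real.pi) Real.pi, (‖f j θ‖₊ : ℝ≥0∞)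
          = ∫⁻ _ in Set.Ioc (-Real.pi) Real.pi, (‖C j‖₊ : ℝ≥0∞) := by
            congr 1; funext θ; rw [hnorm]
        _ = (‖C j‖₊ : ℝ≥0∞) * volume (Set.Ioc (-Real.pi) Real.pi) := by
            rw [MeasureTheory.setLIntegral_const]
        _ = (‖C j‖₊ : ℝ≥0∞) * ENNReal.ofReal (2 * Real.pi) := by
            rw [Real.volume_Ioc]; ring_nf
    simp_rw [enorm_eq_nnnorm, heq]
    rw [ENNReal.tsum_mul_right]
    apply ENNReal.mul_ne_top
    · exact ENNReal.tsum_coe_ne_top_iff_summable.2 hsummC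
    · exact ENNReal.ofReal_ne_top
  rw [hswap]
  -- compute each integral
  have hle : -Real.pi ≤ Real.pi := by linarith [Real.pi_pos]
  have hint : ∀ j : ℤ, (∫ θ in Set.Ioc (-Real.pi) Real.pi, f j θ)
      = if j = m then C m * (2 * Real.pi) else 0 := by
    intro j
    rw [← intervalIntegral.integral_of_le hle]
    by_cases hjm : j = m
    · subst hjm
      rw [if_pos rfl]
      have hfm : ∀ θ : ℝ, f j θ = C j := by
        intro θ
        simp only [hf, sub_self, mul_zero, zero_mul, Complex.exp_zero, mul_one]
      rw [intervalIntegral.integral_congr (fun θ _ => hfm θ)]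
      rw [intervalIntegral.integral_const, sub_neg_eq_add, real_smul]
      push_cast
      ring
    · rw [if_neg hjm]
      have hk0 : ((j:ℂ) - (m:ℂ)) ≠ 0 := by
        intro h
        apply hjm
        have : (j:ℂ) = (m:ℂ) := by linear_combination h
        exact_mod_cast this
      have hc0 : Complex.I * ((j:ℂ) - (m:ℂ)) ≠ 0 := mul_ne_zero Complex.I_ne_zero hk0
      rw [hf]
      simp only
      rw [intervalIntegral.integral_const_mul]
      have : (∫ θ in (-Real.pi)..Real.pi,
          Complex.exp (Complex.I * ((j:ℂ) - (m:ℂ)) * θ)) = 0 := by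
        rw [integral_exp_mul_complex hc0]
        rw [show Complex.I * ((j:ℂ) - (m:ℂ)) * (Real.pi : ℂ)
            = Complex.I * ((j:ℂ) - (m:ℂ)) * ((-Real.pi : ℝ) : ℂ) + ((j - m : ℤ) : ℂ) * (2 * Real.pi * Complex.I) by push_cast; ring]
        rw [Complex.exp_add, Complex.exp_int_mul_two_pi_mul_I, mul_one, sub_self, zero_div]
      rw [this, mul_zero]
  rw [tsum_congr hint, tsum_ite_eq]
  -- final arithmetic
  rw [hC]
  have hKc : (K:ℂ) ≠ 0 := by exact_mod_cast ne_of_gt hK0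
  push_cast
  push_cast at hKKc
  field_simp
  ring_nf
  rw [← mul_pow, mul_inv_cancel₀ hKc, one_pow, one_mul]

lemma phi_ge (α₁ c θ : ℝ) (hα₀ : 0 < α₁) :
    2 + c ^ 2 ≤ 2 + 2 * α₁ + c ^ 2 - 2 * α₁ * Real.cos θ := by
  nlinarith [Real.cos_le_one θ, hα₀.le]

lemma Kr_gt_one (α₁ c θ : ℝ) (hα₀ : 0 < α₁) (hc : 0 < c) : 1 < Kr α₁ c θ := by
  have h1 := phi_ge α₁ c θ hα₀
  have h2 : (0:ℝ) < c ^ 2 := by positivity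
  have h3 := Real.sqrt_nonneg ((2 + 2 * α₁ + c ^ 2 - 2 * α₁ * Real.cos θ) ^ 2 - 4)
  rw [Kr]
  nlinarith

lemma Kr_add_inv (α₁ c θ : ℝ) (hα₀ : 0 < α₁) (hc : 0 < c) :
    Kr α₁ c θ + 1 / Kr α₁ c θ = 2 + 2 * α₁ + c ^ 2 - 2 * α₁ * Real.cos θ := by
  have h1 := phi_ge α₁ c θ hα₀
  have h2 : (0:ℝ) < c ^ 2 := by positivity
  have hK1 := Kr_gt_one α₁ c θ hα₀ hc
  have hK0 : Kr α₁ c θ ≠ 0 := by linarith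
  have hs : Real.sqrt ((2 + 2 * α₁ + c ^ 2 - 2 * α₁ * Real.cos θ) ^ 2 - 4) ^ 2
      = (2 + 2 * α₁ + c ^ 2 - 2 * α₁ * Real.cos θ) ^ 2 - 4 :=
    Real.sq_sqrt (by nlinarith)
  have key : Kr α₁ c θ * ((2 + 2 * α₁ + c ^ 2 - 2 * α₁ * Real.cos θ) - Kr α₁ c θ) = 1 := by
    rw [Kr]
    linear_combination (-1/4 : ℝ) * hs
  have : 1 / Kr α₁ c θ = (2 + 2 * α₁ + c ^ 2 - 2 * α₁ * Real.cos θ) - Kr α₁ c θ := by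
    rw [div_eq_iff hK0]
    linear_combination -key
  linarith

lemma Kr_even (α₁ c θ : ℝ) : Kr α₁ c (-θ) = Kr α₁ c θ := by
  simp [Kr, Real.cos_neg]

/-- One-dimensional integral representation of the LGF:
`B_c(n,m) = (1/2π) ∫_{−π}^{π} e^{inθ} / (K^{|m|}(K − 1/K)) dθ`. -/
theorem stmt9 (α₁ c : ℝ) (hα₀ : 0 < α₁) (hα₁ : α₁ ≤ 1) (hc : 0 < c) (n m : ℤ) :
    B α₁ c n m =
      (1 / (2 * Real.pi) : ℂ) *
        ∫ θ : ℝ in (-Real.pi)..Real.pi,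
          Complex.exp (Complex.I * (n : ℂ) * (θ : ℂ)) /
            ((Kr α₁ c θ ^ m.natAbs * (Kr α₁ c θ - 1 / Kr α₁ c θ) : ℝ) : ℂ) := by
  have hπ := Real.pi_pos
  have hle : -Real.pi ≤ Real.pi := by linarith
  set F : ℝ × ℝ → ℂ := fun ξ =>
    Complex.exp (-Complex.I * ((n : ℂ) * (ξ.1 : ℂ) + (m : ℂ) * (ξ.2 : ℂ))) /
      ((2 * α₁ * (1 - Real.cos ξ.1) + 2 * (1 - Real.cos ξ.2) + c ^ 2 : ℝ) : ℂ) with hF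
  have hD : ∀ ξ : ℝ × ℝ, (0:ℝ) < 2 * α₁ * (1 - Real.cos ξ.1) + 2 * (1 - Real.cos ξ.2) + c ^ 2 := by
    intro ξ
    have h1 : (0:ℝ) ≤ α₁ * (1 - Real.cos ξ.1) :=
      mul_nonneg hα₀.le (by linarith [Real.cos_le_one ξ.1])
    have h2 : (0:ℝ) ≤ 1 - Real.cos ξ.2 := by linarith [Real.cos_le_one ξ.2]
    have h3 : (0:ℝ) < c ^ 2 := by positivity
    linarith
  have c1 : Continuous fun ξ : ℝ × ℝ =>
      (-Complex.I * ((n : ℂ) * (ξ.1 : ℂ) + (m : ℂ) * (ξ.2 : ℂ))) :=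
    continuous_const.mul
      ((continuous_const.mul (Complex.continuous_ofReal.comp continuous_fst)).add
        (continuous_const.mul (Complex.continuous_ofReal.comp continuous_snd)))
  have c2 : Continuous fun ξ : ℝ × ℝ =>
      (2 * α₁ * (1 - Real.cos ξ.1) + 2 * (1 - Real.cos ξ.2) + c ^ 2 : ℝ) :=
    (((continuous_const.mul
        (continuous_const.sub (Real.continuous_cos.comp continuous_fst))).add
      (continuous_const.mul
        (continuous_const.sub (Real.continuous_cos.comp continuous_snd)))).add
      continuous_const)
  have hcont : Continuous F :=
    (Complex.continuous_exp.comp c1).div (Complex.continuous_ofReal.comp c2)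
      (fun ξ => Complex.ofReal_ne_zero.2 (ne_of_gt (hD ξ)))
  have hintF : IntegrableOn F
      (Set.Icc (-Real.pi) Real.pi ×ˢ Set.Icc (-Real.pi) Real.pi) volume :=
    hcont.continuousOn.integrableOn_compact (isCompact_Icc.prod isCompact_Icc)
  have hBval : B α₁ c n m = (1 / (2 * Real.pi) ^ 2 : ℂ) *
      ∫ ξ₁ in Set.Icc (-Real.pi) Real.pi,
        ∫ ξ₂ in Set.Icc (-Real.pi) Real.pi, F (ξ₁, ξ₂) := by
    rw [B]
    congr 1
    rw [MeasureTheory.Measure.volume_eq_prod] at hintF ⊢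
    exact MeasureTheory.setIntegral_prod F hintF
  have inner : ∀ ξ₁ : ℝ,
      (∫ ξ₂ in Set.Icc (-Real.pi) Real.pi, F (ξ₁, ξ₂))
      = (2 * Real.pi : ℂ) * (Complex.exp (-Complex.I * ((n:ℂ) * (ξ₁:ℂ))) /
          ((Kr α₁ c ξ₁ ^ m.natAbs * (Kr α₁ c ξ₁ - 1 / Kr α₁ c ξ₁) : ℝ) : ℂ)) := by
    intro ξ₁
    have hK1 := Kr_gt_one α₁ c ξ₁ hα₀ hc
    have hKi := Kr_add_inv α₁ c ξ₁ hα₀ hc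
    rw [MeasureTheory.integral_Icc_eq_integral_Ioc]
    have hcong : ∀ ξ₂ ∈ Set.Ioc (-Real.pi) Real.pi, F (ξ₁, ξ₂)
        = Complex.exp (-Complex.I * ((n:ℂ) * (ξ₁:ℂ))) *
          (Complex.exp (-Complex.I * ((m:ℂ) * (ξ₂:ℂ))) /
            ((Kr α₁ c ξ₁ + 1 / Kr α₁ c ξ₁ - 2 * Real.cos ξ₂ : ℝ) : ℂ)) := by
      intro ξ₂ _
      rw [hF]
      simp only
      have hDeq : (2 * α₁ * (1 - Real.cos ξ₁) + 2 * (1 - Real.cos ξ₂) + c ^ 2 : ℝ)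
          = Kr α₁ c ξ₁ + 1 / Kr α₁ c ξ₁ - 2 * Real.cos ξ₂ := by
        rw [hKi]; ring
      rw [hDeq, show -Complex.I * ((n:ℂ) * (ξ₁:ℂ) + (m:ℂ) * (ξ₂:ℂ))
          = -Complex.I * ((n:ℂ) * (ξ₁:ℂ)) + -Complex.I * ((m:ℂ) * (ξ₂:ℂ)) by ring,
        Complex.exp_add, mul_div_assoc]
    rw [MeasureTheory.setIntegral_congr_fun measurableSet_Ioc hcong,
      MeasureTheory.integral_const_mul, oneD (Kr α₁ c ξ₁) hK1 m]
    ring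
  rw [hBval, MeasureTheory.setIntegral_congr_fun measurableSet_Icc (fun ξ₁ _ => inner ξ₁),
    MeasureTheory.integral_const_mul]
  have h2π : ((2 * Real.pi : ℝ) : ℂ) ≠ 0 := by
    rw [Complex.ofReal_ne_zero]
    positivity
  have hIcc : (∫ ξ₁ in Set.Icc (-Real.pi) Real.pi,
        Complex.exp (-Complex.I * ((n:ℂ) * (ξ₁:ℂ))) /
          ((Kr α₁ c ξ₁ ^ m.natAbs * (Kr α₁ c ξ₁ - 1 / Kr α₁ c ξ₁) : ℝ) : ℂ))
      = ∫ θ : ℝ in (-Real.pi)..Real.pi,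
          Complex.exp (Complex.I * (n : ℂ) * (θ : ℂ)) /
            ((Kr α₁ c θ ^ m.natAbs * (Kr α₁ c θ - 1 / Kr α₁ c θ) : ℝ) : ℂ) := by
    rw [MeasureTheory.integral_Icc_eq_integral_Ioc, ← intervalIntegral.integral_of_le hle]
    have hcn := intervalIntegral.integral_comp_neg (a := -Real.pi) (b := Real.pi)
        (f := fun θ : ℝ => Complex.exp (Complex.I * (n:ℂ) * (θ:ℂ)) /
          ((Kr α₁ c θ ^ m.natAbs * (Kr α₁ c θ - 1 / Kr α₁ c θ) : ℝ) : ℂ))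
    rw [neg_neg] at hcn
    rw [← hcn]
    apply intervalIntegral.integral_congr
    intro x _
    show Complex.exp (-Complex.I * ((n:ℂ) * (x:ℂ))) / _
        = Complex.exp (Complex.I * (n:ℂ) * ((-x : ℝ):ℂ)) /
          ((Kr α₁ c (-x) ^ m.natAbs * (Kr α₁ c (-x) - 1 / Kr α₁ c (-x)) : ℝ) : ℂ)
    rw [Kr_even, Complex.ofReal_neg,
      show Complex.I * (n:ℂ) * (-(x:ℂ)) = -Complex.I * ((n:ℂ) * (x:ℂ)) by ring]
  rw [hIcc]
  set J := ∫ θ : ℝ in (-Real.pi)..Real.pi,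
      Complex.exp (Complex.I * (n : ℂ) * (θ : ℂ)) /
        ((Kr α₁ c θ ^ m.natAbs * (Kr α₁ c θ - 1 / Kr α₁ c θ) : ℝ) : ℂ) with hJ
  have h2' : ((Real.pi : ℂ)) ≠ 0 := Complex.ofReal_ne_zero.2 (ne_of_gt hπ)
  field_simp
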